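/- Let k be a field, S = k[x_0,...,x_r], S_z = k[x_1,...,x_r], and I ⊆ S a homogeneous ideal. Then for every m ≥ 0, dim_k (S/I)_m = Σ_{i=0}^m dim_k (S_z/K_i(z,I))_{m-i}, where K_i(z,I) is the i-th partial elimination ideal of I with respect to z = (1:0:···:0). -/

import Mathlib

open MvPolynomial

/-- The `i`-th partial elimination ideal (as a set) of a homogeneous ideal
`I ⊆ S = k[x_0,…,x_r]` with respect to the point `z = (1:0:⋯:0)`. -/
def peiSet (k : Type*) [Field k] (r : ℕ) (I : Ideal (MvPolynomial (Fin (r + 1)) k))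
    (i : ℕ) : Set (MvPolynomial (Fin r) k) :=
  {g | ∃ f ∈ I, f.degreeOf 0 ≤ i ∧ (finSuccEquiv k r f).coeff i = g}

/-- The `k`-dimension of the degree-`m` graded piece of `S/I`, realized as the quotient of
the space of homogeneous polynomials of degree `m` by those lying in `I`. -/
noncomputable def gradedPieceDim (k : Type*) [Field k] {n : ℕ}
    (I : Ideal (MvPolynomial (Fin n) k)) (m : ℕ) : ℕ :=
  Module.finrank k
    ((homogeneousSubmodule (Fin n) k m) ⧸
      ((Submodule.restrictScalars k I).comap (homogeneousSubmodule (Fin n) k m).subtype))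

namespace HFPE


variable {k : Type*} [Field k] {r : ℕ}

lemma degree_cons (i : ℕ) (t : Fin r →₀ ℕ) :
    (Finsupp.cons i t).degree = i + t.degree := by
  classical
  show (Finsupp.cons i t).sum (fun _ e => e) = i + t.sum (fun _ e => e)
  exact Finsupp.sum_cons r t i

lemma isHom_degree {φ : MvPolynomial (Fin r) k} {n : ℕ} (h : φ.IsHomogeneous n)
    {d : Fin r →₀ ℕ} (hd : coeff d φ ≠ 0) : d.degree = n := by
  rw [Finsupp.degree_eq_weight_one]
  exact h hd

/-- The coefficient-extraction linear map. -/
noncomputable def phiMap (k : Type*) [Field k] (r m i : ℕ) :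
    (homogeneousSubmodule (Fin (r+1)) k m) →ₗ[k] (homogeneousSubmodule (Fin r) k (m - i)) where
  toFun f := ⟨(finSuccEquiv k r f.1).coeff i, by
    rcases le_or_gt i m with h | h
    · exact (mem_homogeneousSubmodule _ _).mpr
        (((mem_homogeneousSubmodule _ _).mp f.2).finSuccEquiv_coeff_isHomogeneous i (m - i)
          (by omega))
    · have h0 : (finSuccEquiv k r f.1).coeff i = 0 :=
        Polynomial.coeff_eq_zero_of_natDegree_lt (by
          rw [natDegree_finSuccEquiv]
          exact lt_of_le_of_lt ((degreeOf_le_totalDegree f.1 0).trans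
            ((mem_homogeneousSubmodule _ _).mp f.2).totalDegree_le) h)
      rw [h0]; exact Submodule.zero_mem _⟩
  map_add' f g := Subtype.ext (by
    show (finSuccEquiv k r (f.1 + g.1)).coeff i = _
    rw [map_add, Polynomial.coeff_add]; rfl)
  map_smul' c f := Subtype.ext (by
    show (finSuccEquiv k r (c • f.1)).coeff i = _
    rw [map_smul, Polynomial.coeff_smul]; rfl)

@[simp] lemma phiMap_coe (m i : ℕ) (f : homogeneousSubmodule (Fin (r+1)) k m) :
    (phiMap k r m i f : MvPolynomial (Fin r) k) = (finSuccEquiv k r f.1).coeff i := rfl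

/-- x_0-degree filtration of the degree `m` homogeneous part. -/
def Wsub (k : Type*) [Field k] (r m i : ℕ) :
    Submodule k (homogeneousSubmodule (Fin (r+1)) k m) where
  carrier := {f | (f : MvPolynomial (Fin (r+1)) k).degreeOf 0 ≤ i}
  zero_mem' := by simp
  add_mem' {f g} hf hg := le_trans (degreeOf_add_le _ _ _) (max_le hf hg)
  smul_mem' c f hf := by
    show (c • (f : MvPolynomial (Fin (r+1)) k)).degreeOf 0 ≤ i
    rw [smul_eq_C_mul]
    exact le_trans (degreeOf_C_mul_le _ _ _) hf

lemma mem_Wsub {m i : ℕ} {f : homogeneousSubmodule (Fin (r+1)) k m} :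
    f ∈ Wsub k r m i ↔ (f : MvPolynomial (Fin (r+1)) k).degreeOf 0 ≤ i := Iff.rfl

lemma Wsub_mono {m : ℕ} {i j : ℕ} (h : i ≤ j) : Wsub k r m i ≤ Wsub k r m j :=
  fun _ hf => le_trans hf h

/-- The composite map to the quotient. -/
noncomputable def psiMap (k : Type*) [Field k] (r m i : ℕ)
    (Jp : Ideal (MvPolynomial (Fin r) k)) :
    (homogeneousSubmodule (Fin (r+1)) k m) →ₗ[k]
      ((homogeneousSubmodule (Fin r) k (m - i)) ⧸
        ((Submodule.restrictScalars k Jp).comap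
          (homogeneousSubmodule (Fin r) k (m - i)).subtype)) :=
  (((Submodule.restrictScalars k Jp).comap
      (homogeneousSubmodule (Fin r) k (m - i)).subtype).mkQ).comp (phiMap k r m i)

lemma mem_ker_psiMap {m i : ℕ} {Jp : Ideal (MvPolynomial (Fin r) k)}
    {f : homogeneousSubmodule (Fin (r+1)) k m} :
    f ∈ LinearMap.ker (psiMap k r m i Jp) ↔ (finSuccEquiv k r f.1).coeff i ∈ Jp := by
  rw [LinearMap.mem_ker, psiMap, LinearMap.comp_apply, Submodule.mkQ_apply,
    Submodule.Quotient.mk_eq_zero, Submodule.mem_comap]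
  rfl

lemma coeff_finSuccEquiv_homogeneousComponent {m i : ℕ} (him : i ≤ m)
    (f' : MvPolynomial (Fin (r+1)) k) :
    (finSuccEquiv k r (homogeneousComponent m f')).coeff i
      = homogeneousComponent (m - i) ((finSuccEquiv k r f').coeff i) := by
  ext μ
  rw [finSuccEquiv_coeff_coeff, coeff_homogeneousComponent, coeff_homogeneousComponent,
    finSuccEquiv_coeff_coeff, degree_cons,
    if_congr (by omega : (i + μ.degree = m) ↔ (μ.degree = m - i)) rfl rfl]

lemma lift_exists {m i : ℕ} (him : i ≤ m) (g : MvPolynomial (Fin r) k)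
    (hg : g.IsHomogeneous (m - i)) :
    ∃ f : MvPolynomial (Fin (r+1)) k, f.IsHomogeneous m ∧ f.degreeOf 0 ≤ i ∧
      (finSuccEquiv k r f).coeff i = g := by
  refine ⟨(finSuccEquiv k r).symm (Polynomial.C g * Polynomial.X ^ i), ?_, ?_, ?_⟩
  · intro d hd
    rw [← Finsupp.cons_tail d, ← finSuccEquiv_coeff_coeff,
      (finSuccEquiv k r).apply_symm_apply, Polynomial.coeff_C_mul,
      Polynomial.coeff_X_pow] at hd
    by_cases hdi : d 0 = i
    · rw [hdi, if_pos rfl, mul_one] at hd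
      have ht : (Finsupp.tail d).degree = m - i := isHom_degree hg hd
      rw [show Finsupp.weight (1 : Fin (r+1) → ℕ) d = Finsupp.weight (fun _ => 1) d from rfl,
        ← Finsupp.degree_eq_weight_one, ← Finsupp.cons_tail d, degree_cons, hdi, ht]
      omega
    · rw [if_neg hdi, mul_zero] at hd
      simp at hd
  · rw [← natDegree_finSuccEquiv, (finSuccEquiv k r).apply_symm_apply]
    exact le_trans (Polynomial.natDegree_mul_le) (by simp)
  · rw [(finSuccEquiv k r).apply_symm_apply]
    simp [Polynomial.coeff_C_mul, Polynomial.coeff_X_pow]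

lemma map_psiMap_Wsub {m i : ℕ} (him : i ≤ m) (Jp : Ideal (MvPolynomial (Fin r) k)) :
    Submodule.map (psiMap k r m i Jp) (Wsub k r m i) = ⊤ := by
  rw [Submodule.eq_top_iff']
  intro q
  obtain ⟨g, rfl⟩ := Submodule.mkQ_surjective _ q
  obtain ⟨f, hfh, hfd, hfc⟩ := lift_exists him g.1
    ((mem_homogeneousSubmodule _ _).mp g.2)
  refine ⟨⟨f, (mem_homogeneousSubmodule _ _).mpr hfh⟩, hfd, ?_⟩
  show Submodule.mkQ _ (phiMap k r m i _) = _
  congr 1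
  exact Subtype.ext hfc

/-- Rank-nullity for a restricted map. -/
lemma rank_split {K M Q : Type*} [Field K] [AddCommGroup M] [Module K M] [AddCommGroup Q]
    [Module K Q] [FiniteDimensional K M] (p : Submodule K M) (f : M →ₗ[K] Q) :
    Module.finrank K p
      = Module.finrank K (Submodule.map f p)
        + Module.finrank K (p ⊓ LinearMap.ker f : Submodule K M) := by
  have h1 := LinearMap.finrank_range_add_finrank_ker (f.domRestrict p)
  rw [LinearMap.range_domRestrict] at h1
  have h2 : LinearMap.ker (f.domRestrict p)
      = Submodule.comap p.subtype (p ⊓ LinearMap.ker f) := by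
    ext x
    simp [LinearMap.mem_ker, Submodule.mem_comap, LinearMap.domRestrict_apply, x.2]
  rw [h2, (Submodule.comapSubtypeEquivOfLe
    (inf_le_left : p ⊓ LinearMap.ker f ≤ p)).finrank_eq] at h1
  omega

lemma exists_homog_witness {m i : ℕ} (him : i ≤ m)
    (I : Ideal (MvPolynomial (Fin (r + 1)) k))
    (hI : ∀ f ∈ I, ∀ n, homogeneousComponent n f ∈ I)
    {x : homogeneousSubmodule (Fin (r+1)) k m}
    (hx : (finSuccEquiv k r x.1).coeff i ∈ peiSet k r I i) :
    ∃ f'' : MvPolynomial (Fin (r+1)) k, f'' ∈ I ∧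
      f'' ∈ homogeneousSubmodule (Fin (r+1)) k m ∧
      f''.degreeOf 0 ≤ i ∧ (finSuccEquiv k r f'').coeff i = (finSuccEquiv k r x.1).coeff i := by
  obtain ⟨f', hf'I, hf'd, hf'c⟩ := hx
  refine ⟨homogeneousComponent m f', hI f' hf'I m, homogeneousComponent_mem m f', ?_, ?_⟩
  · rw [degreeOf_le_iff]
    intro μ hμ
    have h1 := mem_support_iff.mp hμ
    rw [coeff_homogeneousComponent] at h1
    split_ifs at h1 with hc
    · exact degreeOf_le_iff.mp hf'd μ (mem_support_iff.mpr h1)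
    · simp at h1
  · have hmem : (finSuccEquiv k r x.1).coeff i ∈ homogeneousSubmodule (Fin r) k (m - i) :=
      (mem_homogeneousSubmodule _ _).mpr
        (((mem_homogeneousSubmodule _ _).mp x.2).finSuccEquiv_coeff_isHomogeneous i (m - i)
          (by omega))
    rw [coeff_finSuccEquiv_homogeneousComponent him, hf'c,
      homogeneousComponent_of_mem hmem, if_pos rfl]

lemma ker_inter_step (I : Ideal (MvPolynomial (Fin (r + 1)) k))
    (hI : ∀ f ∈ I, ∀ n, homogeneousComponent n f ∈ I)
    (J : ℕ → Ideal (MvPolynomial (Fin r) k))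
    (hJ : ∀ i, (J i : Set (MvPolynomial (Fin r) k)) = peiSet k r I i)
    {m i : ℕ} (him : i + 1 ≤ m) :
    Wsub k r m (i+1) ⊓ LinearMap.ker (psiMap k r m (i+1) (J (i+1)))
      = Wsub k r m i ⊔
        ((Submodule.restrictScalars k I).comap
            (homogeneousSubmodule (Fin (r+1)) k m).subtype ⊓ Wsub k r m (i+1)) := by
  apply le_antisymm
  · intro x hx
    obtain ⟨hxW, hxK⟩ := Submodule.mem_inf.mp hx
    rw [mem_ker_psiMap] at hxK
    have hpei : (finSuccEquiv k r x.1).coeff (i+1) ∈ peiSet k r I (i+1) := by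
      rw [← hJ (i+1)]; exact SetLike.mem_coe.mpr hxK
    obtain ⟨f'', hf''I, hf''V, hf''d, hf''c⟩ := exists_homog_witness him I hI hpei
    have hxy : x = (x - ⟨f'', hf''V⟩) + ⟨f'', hf''V⟩ := by abel
    rw [hxy]
    refine Submodule.add_mem_sup ?_ (Submodule.mem_inf.mpr ⟨by simpa using hf''I, hf''d⟩)
    show ((x - ⟨f'', hf''V⟩ : _) : MvPolynomial (Fin (r+1)) k).degreeOf 0 ≤ i
    rw [← natDegree_finSuccEquiv]
    apply Polynomial.natDegree_le_iff_coeff_eq_zero.mpr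
    intro d hd
    have hc : ((x - (⟨f'', hf''V⟩ : homogeneousSubmodule (Fin (r+1)) k m) : _) :
        MvPolynomial (Fin (r+1)) k) = x.1 - f'' := rfl
    rw [hc, map_sub, Polynomial.coeff_sub]
    rcases Nat.lt_or_ge d (i+2) with h2 | h2
    · have hde : d = i + 1 := by omega
      subst hde
      rw [hf''c, sub_self]
    · rw [Polynomial.coeff_eq_zero_of_natDegree_lt
          (by rw [natDegree_finSuccEquiv]; exact lt_of_le_of_lt hxW (by omega)),
        Polynomial.coeff_eq_zero_of_natDegree_lt
          (by rw [natDegree_finSuccEquiv]; exact lt_of_le_of_lt hf''d (by omega)),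
        sub_self]
  · apply sup_le
    · intro x hx
      refine Submodule.mem_inf.mpr ⟨Wsub_mono (by omega) hx, ?_⟩
      rw [mem_ker_psiMap]
      have h0 : (finSuccEquiv k r x.1).coeff (i+1) = 0 :=
        Polynomial.coeff_eq_zero_of_natDegree_lt
          (by rw [natDegree_finSuccEquiv]; exact lt_of_le_of_lt hx (by omega))
      rw [h0]; exact Ideal.zero_mem _
    · rintro x ⟨hxI, hxW⟩
      refine Submodule.mem_inf.mpr ⟨hxW, ?_⟩
      rw [mem_ker_psiMap, ← SetLike.mem_coe, hJ (i+1)]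
      exact ⟨x.1, by simpa using hxI, hxW, rfl⟩

lemma ker_inter_base (I : Ideal (MvPolynomial (Fin (r + 1)) k))
    (hI : ∀ f ∈ I, ∀ n, homogeneousComponent n f ∈ I)
    (J : ℕ → Ideal (MvPolynomial (Fin r) k))
    (hJ : ∀ i, (J i : Set (MvPolynomial (Fin r) k)) = peiSet k r I i) (m : ℕ) :
    Wsub k r m 0 ⊓ LinearMap.ker (psiMap k r m 0 (J 0))
      = (Submodule.restrictScalars k I).comap
          (homogeneousSubmodule (Fin (r+1)) k m).subtype ⊓ Wsub k r m 0 := by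
  apply le_antisymm
  · intro x hx
    obtain ⟨hxW, hxK⟩ := Submodule.mem_inf.mp hx
    rw [mem_ker_psiMap] at hxK
    have hpei : (finSuccEquiv k r x.1).coeff 0 ∈ peiSet k r I 0 := by
      rw [← hJ 0]; exact SetLike.mem_coe.mpr hxK
    obtain ⟨f'', hf''I, hf''V, hf''d, hf''c⟩ :=
      exists_homog_witness (Nat.zero_le m) I hI hpei
    have hx1 : x.1 = f'' := by
      have h1 : finSuccEquiv k r x.1 = finSuccEquiv k r f'' := by
        rw [Polynomial.eq_C_of_natDegree_le_zero (p := finSuccEquiv k r x.1)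
            (by rw [natDegree_finSuccEquiv]; exact hxW),
          Polynomial.eq_C_of_natDegree_le_zero (p := finSuccEquiv k r f'')
            (by rw [natDegree_finSuccEquiv]; exact hf''d), hf''c]
      exact (finSuccEquiv k r).injective h1
    exact Submodule.mem_inf.mpr ⟨by simpa using (hx1 ▸ hf''I), hxW⟩
  · rintro x ⟨hxI, hxW⟩
    refine Submodule.mem_inf.mpr ⟨hxW, ?_⟩
    rw [mem_ker_psiMap, ← SetLike.mem_coe, hJ 0]
    exact ⟨x.1, by simpa using hxI, hxW, rfl⟩

lemma fd_homog (n m : ℕ) : FiniteDimensional k (homogeneousSubmodule (Fin n) k m) := by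
  have hle : homogeneousSubmodule (Fin n) k m ≤ restrictTotalDegree (Fin n) k m := fun p hp =>
    (mem_restrictTotalDegree _ _ _).mpr ((mem_homogeneousSubmodule _ _).mp hp).totalDegree_le
  exact Submodule.finiteDimensional_of_le hle
end HFPE

open HFPE in
/-- Hilbert function via the inner projection: for a homogeneous ideal
`I ⊆ S = k[x_0,…,x_r]`, with `K_i(z,I) ⊆ S_z = k[x_1,…,x_r]` its partial elimination
ideals with respect to `z = (1:0:⋯:0)`, one has for every `m ≥ 0`
`dim_k (S/I)_m = Σ_{i=0}^m dim_k (S_z/K_i(z,I))_{m-i}`. -/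
theorem hilbert_function_partial_elimination (k : Type*) [Field k] (r : ℕ)
    (I : Ideal (MvPolynomial (Fin (r + 1)) k))
    (hI : ∀ f ∈ I, ∀ n, homogeneousComponent n f ∈ I)
    (J : ℕ → Ideal (MvPolynomial (Fin r) k))
    (hJ : ∀ i, (J i : Set (MvPolynomial (Fin r) k)) = peiSet k r I i) (m : ℕ) :
    gradedPieceDim k I m = ∑ i ∈ Finset.range (m + 1), gradedPieceDim k (J i) (m - i) := by
  classical
  haveI : FiniteDimensional k (homogeneousSubmodule (Fin (r+1)) k m) := fd_homog (r+1) m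
  have hN' : True := trivial
  have hQ : ∀ i, gradedPieceDim k (J i) (m - i) =
      Module.finrank k ((homogeneousSubmodule (Fin r) k (m - i)) ⧸
        ((Submodule.restrictScalars k (J i)).comap
          (homogeneousSubmodule (Fin r) k (m - i)).subtype)) := fun i => rfl
  have key : ∀ i, i ≤ m →
      Module.finrank k (Wsub k r m i) =
        Module.finrank k ((Submodule.restrictScalars k I).comap (homogeneousSubmodule (Fin (r+1)) k m).subtype ⊓ Wsub k r m i : Submodule k _) +
          ∑ j ∈ Finset.range (i + 1), gradedPieceDim k (J j) (m - j) := by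
    intro i
    induction i with
    | zero =>
      intro _
      have h1 := rank_split (Wsub k r m 0) (psiMap k r m 0 (J 0))
      rw [map_psiMap_Wsub (Nat.zero_le m) (J 0), ker_inter_base I hI J hJ m,
        finrank_top] at h1
      rw [h1, Finset.sum_range_one, hQ 0]
      omega
    | succ i ih =>
      intro him
      have hi := ih (by omega)
      have h1 := rank_split (Wsub k r m (i+1)) (psiMap k r m (i+1) (J (i+1)))
      rw [map_psiMap_Wsub him (J (i+1)), ker_inter_step I hI J hJ him, finrank_top] at h1
      have h2 := Submodule.finrank_sup_add_finrank_inf_eq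
        (Wsub k r m i) ((Submodule.restrictScalars k I).comap (homogeneousSubmodule (Fin (r+1)) k m).subtype ⊓ Wsub k r m (i+1))
      have h3 : Wsub k r m i ⊓ ((Submodule.restrictScalars k I).comap (homogeneousSubmodule (Fin (r+1)) k m).subtype ⊓ Wsub k r m (i+1)) = (Submodule.restrictScalars k I).comap (homogeneousSubmodule (Fin (r+1)) k m).subtype ⊓ Wsub k r m i := by
        ext x
        simp only [Submodule.mem_inf]
        constructor
        · rintro ⟨hw, hn, _⟩; exact ⟨hn, hw⟩
        · rintro ⟨hn, hw⟩; exact ⟨hw, hn, Wsub_mono (by omega) hw⟩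
      rw [h3] at h2
      rw [Finset.sum_range_succ, h1, hQ (i+1)]
      omega
  have hWm : Wsub k r m m = ⊤ := by
    rw [Submodule.eq_top_iff']
    intro x
    exact le_trans (degreeOf_le_totalDegree x.1 0)
      ((mem_homogeneousSubmodule _ _).mp x.2).totalDegree_le
  have h1 := key m le_rfl
  rw [hWm, inf_top_eq, finrank_top] at h1
  have h2 := Submodule.finrank_quotient_add_finrank
    ((Submodule.restrictScalars k I).comap (homogeneousSubmodule (Fin (r+1)) k m).subtype)
  have h3 : gradedPieceDim k I m =
      Module.finrank k ((homogeneousSubmodule (Fin (r+1)) k m) ⧸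
        (Submodule.restrictScalars k I).comap
          (homogeneousSubmodule (Fin (r+1)) k m).subtype) := rfl
  omega
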